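/- For all g, h ∈ SL₂(ℝ), the quantity ω(g,h) defined via the principal logarithm of automorphy factors takes only the values −1, 0, or 1. -/

import Mathlib

open Matrix UpperHalfPlane Complex
open scoped MatrixGroups

abbrev SL2R := Matrix.SpecialLinearGroup (Fin 2) ℝ

/-- The automorphy factor `j(g,z) = cz + d`. -/
noncomputable def jFac (g : SL2R) (z : ℂ) : ℂ :=
  (g.1 1 0 : ℝ) * z + (g.1 1 1 : ℝ)

/-- Petersson's 2-cocycle
`ω(g,h) = (1/(2πi))(Log j(g, h·z) + Log j(h,z) − Log j(gh,z))`. -/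
noncomputable def omegaC (g h : SL2R) (z : ℍ) : ℂ :=
  (1 / (2 * Real.pi * Complex.I)) *
    (Complex.log (jFac g ((h • z : ℍ) : ℂ)) + Complex.log (jFac h (z : ℂ))
      - Complex.log (jFac (g * h) (z : ℂ)))

lemma jFac_eq_denom (g : SL2R) (z : ℍ) :
    jFac g (z : ℂ) = UpperHalfPlane.denom (g : GL(2, ℝ)⁺) z := by
  simp [jFac, UpperHalfPlane.denom]

lemma jFac_ne_zero (g : SL2R) (z : ℍ) : jFac g (z : ℂ) ≠ 0 := by
  rw [jFac_eq_denom]; exact UpperHalfPlane.denom_ne_zero _ z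

lemma jFac_cocycle (g h : SL2R) (z : ℍ) :
    jFac (g * h) (z : ℂ) = jFac g ((h • z : ℍ) : ℂ) * jFac h (z : ℂ) := by
  rw [jFac_eq_denom, jFac_eq_denom, jFac_eq_denom]
  have : ((g * h : SL2R) : GL(2, ℝ)⁺) = (g : GL(2, ℝ)⁺) * (h : GL(2, ℝ)⁺) := by
    simp
  rw [this]
  rw [Subgroup.coe_mul, UpperHalfPlane.denom_cocycle_σ, UpperHalfPlane.σ,
    if_pos (by exact (SpecialLinearGroup.toGLPos h).2)]
  rfl

lemma log_add_log_sub_log_mul (a b : ℂ) (ha : a ≠ 0) (hb : b ≠ 0) :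
    ∃ k : ℤ, (k = -1 ∨ k = 0 ∨ k = 1) ∧
      Complex.log a + Complex.log b - Complex.log (a * b)
        = (k : ℂ) * (2 * Real.pi * Complex.I) := by
  have habs : ‖a * b‖ = ‖a‖ * ‖b‖ := norm_mul a b
  have hangle : (Complex.arg (a * b) : Real.Angle) = Complex.arg a + Complex.arg b :=
    Complex.arg_mul_coe_angle ha hb
  have : ((Complex.arg a + Complex.arg b : ℝ) : Real.Angle) = Complex.arg (a * b) := by
    rw [hangle]; rfl
  obtain ⟨k, hk⟩ := Real.Angle.angle_eq_iff_two_pi_dvd_sub.mp this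
  refine ⟨k, ?_, ?_⟩
  · -- bound on k
    have pi_pos := Real.pi_pos
    have h1 := Complex.abs_arg_le_pi a
    have h2 := Complex.abs_arg_le_pi b
    have h3 := Complex.abs_arg_le_pi (a * b)
    rw [abs_le] at h1 h2 h3
    have hkb : |(k : ℝ)| ≤ 3 / 2 := by
      have hd : |Complex.arg a + Complex.arg b - Complex.arg (a * b)| ≤ 3 * Real.pi := by
        rw [abs_le]; constructor <;> nlinarith [h1.1, h1.2, h2.1, h2.2, h3.1, h3.2]
      rw [hk, abs_mul, abs_mul, abs_of_pos pi_pos] at hd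
      have h2' : |(2 : ℝ)| = 2 := by norm_num
      rw [h2'] at hd
      nlinarith [abs_nonneg ((k : ℝ))]
    have hint : |k| ≤ 1 := by
      by_contra hcon
      push_neg at hcon
      have : (2 : ℝ) ≤ |(k : ℝ)| := by
        rw [← Int.cast_abs]
        exact_mod_cast hcon
      linarith
    rw [abs_le] at hint
    omega
  · -- the identity
    rw [Complex.log, Complex.log, Complex.log, habs,
      Real.log_mul (norm_ne_zero_iff.mpr ha) (norm_ne_zero_iff.mpr hb)]
    have harg : Complex.arg a + Complex.arg b - Complex.arg (a * b) = 2 * Real.pi * k := hk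
    have : (Complex.arg a : ℂ) + Complex.arg b - Complex.arg (a * b)
        = (2 * Real.pi * k : ℝ) := by exact_mod_cast congrArg (Complex.ofReal ·) harg
    push_cast at this ⊢
    ring_nf
    ring_nf at this
    linear_combination Complex.I * this

/-- `ω(g,h)` takes only the values `−1, 0, 1`. -/
theorem omegaC_mem (g h : SL2R) (z : ℍ) :
    omegaC g h z = -1 ∨ omegaC g h z = 0 ∨ omegaC g h z = 1 := by
  obtain ⟨k, hk01, hk⟩ := log_add_log_sub_log_mul (jFac g ((h • z : ℍ) : ℂ))
    (jFac h (z : ℂ)) (by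
      have := jFac_ne_zero g (h • z); exact this) (jFac_ne_zero h z)
  have hω : omegaC g h z = (k : ℂ) := by
    rw [omegaC, jFac_cocycle, hk]
    have h2πi : (2 * (Real.pi : ℂ) * Complex.I) ≠ 0 := by
      simp [Real.pi_ne_zero, Complex.I_ne_zero]
    field_simp
  rcases hk01 with h1 | h1 | h1 <;> rw [hω, h1] <;> simp
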